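/- Let W_1, W_2, ... be i.i.d. real random variables with common distribution P_0 symmetric about 0 (not depending on p). Define, for each p, π_j^{(p)} = (1 + #{k ∈ [p] : W_k ≤ -W_j})/p if W_j > 0 and 1 otherwise. Then for each fixed j and every t ∈ [0,1], limsup_{p→∞} P(π_j^{(p)} ≤ t) ≤ t. -/

import Mathlib

open MeasureTheory ProbabilityTheory
open scoped ENNReal

/-- Deterministic rank-counting lemma: at most `r` indices can have rank `≤ r`. -/
lemma rank_card_le {p r : ℕ} (x : Fin p → ℝ) :
    (Finset.univ.filter fun i =>
      (Finset.univ.filter fun k => x k ≤ x i).card ≤ r).card ≤ r := by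
  set S := Finset.univ.filter fun i : Fin p =>
    (Finset.univ.filter fun k => x k ≤ x i).card ≤ r with hS
  rcases S.eq_empty_or_nonempty with h | h
  · simp [h]
  · obtain ⟨i, hiS, hmax⟩ := S.exists_max_image x h
    have hsub : S ⊆ Finset.univ.filter fun k => x k ≤ x i :=
      fun k hk => Finset.mem_filter.2 ⟨Finset.mem_univ _, hmax k hk⟩
    exact le_trans (Finset.card_le_card hsub) ((Finset.mem_filter.1 hiS).2)

/-- The law of the tuple `(W 0, ..., W (p-1))` is the product measure. -/
lemma tuple_law {Ω : Type*} [MeasurableSpace Ω] (μ : Measure Ω)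
    [IsProbabilityMeasure μ] (W : ℕ → Ω → ℝ) (hW : ∀ i, Measurable (W i))
    (P₀ : Measure ℝ) [IsProbabilityMeasure P₀]
    (hiid : iIndepFun W μ)
    (hlaw : ∀ i, μ.map (W i) = P₀) (p : ℕ) :
    μ.map (fun ω (i : Fin p) => W i ω) = Measure.pi (fun _ : Fin p => P₀) := by
  have hT : Measurable fun ω (i : Fin p) => W i ω :=
    measurable_pi_iff.mpr fun i => hW i
  refine (Measure.pi_eq fun s hs => ?_).symm
  rw [Measure.map_apply hT (MeasurableSet.univ_pi hs)]
  classical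
  set sets : ℕ → Set ℝ := fun n => if h : n < p then s ⟨n, h⟩ else Set.univ with hsets
  have key : ∀ (n : ℕ) (hn : n < p), sets n = s ⟨n, hn⟩ := fun n hn => dif_pos hn
  have keyge : ∀ (n : ℕ), ¬ n < p → sets n = Set.univ := fun n hn => dif_neg hn
  have hpre : (fun ω (i : Fin p) => W i ω) ⁻¹' Set.pi Set.univ s
      = ⋂ n ∈ Finset.range p, W n ⁻¹' sets n := by
    ext ω
    simp only [Set.mem_preimage, Set.mem_pi, Set.mem_univ, forall_true_left,
      Set.mem_iInter, Finset.mem_range]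
    constructor
    · intro h n hn
      rw [key n hn]
      exact h ⟨n, hn⟩
    · intro h i
      have := h i.val i.isLt
      rw [key i.val i.isLt] at this
      exact this
  have hmeas : ∀ n, n ∈ Finset.range p → MeasurableSet (sets n) := by
    intro n _
    by_cases h : n < p
    · rw [key n h]; exact hs _
    · rw [keyge n h]; exact MeasurableSet.univ
  rw [hpre, hiid.measure_inter_preimage_eq_mul _ hmeas]
  have hμ : ∀ n, n ∈ Finset.range p → μ (W n ⁻¹' sets n) = P₀ (sets n) := by
    intro n hn
    rw [← hlaw n, Measure.map_apply (hW n) (hmeas n hn)]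
  rw [Finset.prod_congr rfl hμ, ← Fin.prod_univ_eq_prod_range (fun n => P₀ (sets n)) p]
  refine Finset.prod_congr rfl fun i _ => ?_
  rw [key i.val i.isLt]

/-- Asymptotic validity of the intermediate p-values (all-null case): if
`W_0, W_1, ...` are i.i.d. with common distribution `P₀` symmetric about `0`
(not depending on `p`), and
`π_j^{(p)} = (1 + #{k ∈ [p] : W_k ≤ -W_j})/p` if `W_j > 0`, else `1`,
then for each fixed `j` and every `t ∈ [0,1]`,
`limsup_{p→∞} P(π_j^{(p)} ≤ t) ≤ t`. -/
theorem stmt_16 {Ω : Type*} [MeasurableSpace Ω] (μ : Measure Ω)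
    [IsProbabilityMeasure μ] (W : ℕ → Ω → ℝ) (hW : ∀ i, Measurable (W i))
    (P₀ : Measure ℝ) [IsProbabilityMeasure P₀]
    (hiid : iIndepFun W μ)
    (hlaw : ∀ i, μ.map (W i) = P₀)
    (hsym : P₀.map (fun x => -x) = P₀)
    (j : ℕ) (t : ℝ) (ht0 : 0 ≤ t) (ht1 : t ≤ 1) :
    let π : ℕ → Ω → ℝ := fun p ω =>
      if 0 < W j ω then
        (1 + (({k | k < p ∧ W k ω ≤ -W j ω} : Set ℕ).ncard : ℝ)) / p
      else 1
    Filter.limsup (fun p => (μ {ω | π p ω ≤ t}).toReal) Filter.atTop ≤ t := by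
  intro π
  classical
  have hbdd : Filter.IsCoboundedUnder (· ≤ ·) Filter.atTop
      (fun p => (μ {ω | π p ω ≤ t}).toReal) :=
    Filter.isCoboundedUnder_le_of_le _ (fun p => ENNReal.toReal_nonneg)
  rcases lt_or_eq_of_le ht1 with ht1' | ht1'
  · -- main case `t < 1`
    refine Filter.limsup_le_of_le hbdd ?_
    rw [Filter.eventually_atTop]
    refine ⟨j + 1, fun p hp => ?_⟩
    have hjp : j < p := hp
    have hp0 : 0 < p := lt_of_le_of_lt (Nat.zero_le j) hjp
    set j' : Fin p := ⟨j, hjp⟩ with hj'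
    -- the count as a function on `Fin p → ℝ`
    set c : (Fin p → ℝ) → ℕ := fun x =>
      (Finset.univ.filter fun k : Fin p => x k ≤ -x j').card with hc
    set A : Set (Fin p → ℝ) := {x | 0 < x j' ∧ (1 + (c x : ℝ)) / p ≤ t} with hA
    have hcmeas : Measurable c := by
      have : c = fun x => ∑ k : Fin p, if x k ≤ -x j' then 1 else 0 := by
        funext x; exact Finset.card_filter _ _
      rw [this]
      refine Finset.measurable_sum _ fun k _ => Measurable.ite ?_
        measurable_const measurable_const
      exact measurableSet_le (measurable_pi_apply k) (measurable_pi_apply j').neg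
    have hAmeas : MeasurableSet A := by
      refine MeasurableSet.inter ?_ ?_
      · exact measurableSet_lt measurable_const (measurable_pi_apply j')
      · exact measurableSet_le
          ((measurable_from_nat (f := fun n : ℕ => (1 + (n : ℝ)) / p)).comp hcmeas)
          measurable_const
    have hT : Measurable fun ω (i : Fin p) => W i ω :=
      measurable_pi_iff.mpr fun i => hW i
    -- the event equals the preimage of `A`
    have hEA : {ω | π p ω ≤ t} = (fun ω (i : Fin p) => W i ω) ⁻¹' A := by
      ext ω
      simp only [Set.mem_setOf_eq, Set.mem_preimage, hA, Set.mem_setOf_eq]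
      by_cases h : 0 < W j ω
      · have hcount : ({k | k < p ∧ W k ω ≤ -W j ω} : Set ℕ).ncard
            = c (fun i : Fin p => W i ω) := by
          have h1 : ({k | k < p ∧ W k ω ≤ -W j ω} : Set ℕ)
              = ↑((Finset.range p).filter fun k => W k ω ≤ -W j ω) := by
            ext k; simp [and_comm]
          rw [h1, Set.ncard_coe_finset, hc]
          simp only [Finset.card_filter]
          rw [← Fin.sum_univ_eq_sum_range (fun k => if W k ω ≤ -W j ω then 1 else 0) p]
        simp only [π, if_pos h, hcount]
        constructor
        · intro hle; exact ⟨h, hle⟩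
        · intro hle; exact hle.2
      · simp only [π, if_neg h]
        constructor
        · intro hle; exact absurd (lt_of_lt_of_le ht1' hle) (lt_irrefl t)
        · intro hle; exact absurd hle.1 h
    set ν : Measure (Fin p → ℝ) := Measure.pi (fun _ : Fin p => P₀) with hν
    have hmap : μ {ω | π p ω ≤ t} = ν A := by
      rw [hEA, ← Measure.map_apply hT hAmeas,
        tuple_law μ W hW P₀ hiid hlaw p]
    -- flip the sign of coordinate j'
    set Φ : (Fin p → ℝ) → (Fin p → ℝ) :=
      fun x k => if k = j' then -(x k) else x k with hΦ
    have hΦmp : MeasurePreserving Φ ν ν := by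
      have : Φ = fun x (k : Fin p) => (fun k : Fin p =>
          if k = j' then (fun y : ℝ => -y) else id) k (x k) := by
        funext x k
        show (if k = j' then -(x k) else x k) = _
        by_cases h : k = j' <;> simp only [h, if_pos, if_neg, id_eq, if_true, if_false]
      rw [this]
      refine measurePreserving_pi _ _ fun k => ?_
      by_cases h : k = j'
      · simp only [h, if_pos rfl]
        exact ⟨measurable_neg, hsym⟩
      · simp only [if_neg h]
        exact MeasurePreserving.id _
    have hflip : ν A = ν (Φ ⁻¹' A) := (hΦmp.measure_preimage hAmeas.nullMeasurableSet).symm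
    -- the rank sets
    set r : ℕ := ⌊t * p⌋₊ with hr
    set B : Fin p → Set (Fin p → ℝ) := fun i =>
      {x | (Finset.univ.filter fun k => x k ≤ x i).card ≤ r} with hB
    have hBmeas : ∀ i, MeasurableSet (B i) := by
      intro i
      have hRmeas : Measurable fun x : Fin p → ℝ =>
          (Finset.univ.filter fun k => x k ≤ x i).card := by
        have : (fun x : Fin p → ℝ => (Finset.univ.filter fun k => x k ≤ x i).card)
            = fun x => ∑ k : Fin p, if x k ≤ x i then 1 else 0 := by
          funext x; exact Finset.card_filter _ _
        rw [this]
        refine Finset.measurable_sum _ fun k _ => Measurable.ite ?_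
          measurable_const measurable_const
        exact measurableSet_le (measurable_pi_apply k) (measurable_pi_apply i)
      exact hRmeas measurableSet_Iic
    -- containment after the flip
    have hsub : Φ ⁻¹' A ⊆ B j' := by
      intro x hx
      simp only [Set.mem_preimage, hA, Set.mem_setOf_eq] at hx
      obtain ⟨hpos, hle⟩ := hx
      have hΦj : Φ x j' = -x j' := if_pos rfl
      rw [hΦj] at hpos
      have hxj : x j' < 0 := by linarith
      -- relate the flipped count to the rank
      have hcount : (Finset.univ.filter fun k : Fin p => x k ≤ x j').card
          ≤ 1 + c (Φ x) := by
        have hsub2 : (Finset.univ.filter fun k : Fin p => x k ≤ x j')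
            ⊆ insert j' (Finset.univ.filter fun k : Fin p => Φ x k ≤ -(Φ x j')) := by
          intro k hk
          rcases eq_or_ne k j' with h | h
          · rw [h]; exact Finset.mem_insert_self _ _
          · refine Finset.mem_insert_of_mem (Finset.mem_filter.2 ⟨Finset.mem_univ _, ?_⟩)
            have hk' := (Finset.mem_filter.1 hk).2
            have hΦk : Φ x k = x k := if_neg h
            rw [hΦk, hΦj, neg_neg]
            exact hk'
        calc (Finset.univ.filter fun k : Fin p => x k ≤ x j').card
            ≤ (insert j' (Finset.univ.filter
                fun k : Fin p => Φ x k ≤ -(Φ x j'))).card := Finset.card_le_card hsub2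
          _ ≤ 1 + c (Φ x) := by
              rw [hc, add_comm]
              exact Finset.card_insert_le _ _
      have hcast : (1 + (c (Φ x) : ℝ)) ≤ t * p := by
        rw [div_le_iff₀ (by positivity : (0:ℝ) < p)] at hle
        exact hle
      have hrank : ((Finset.univ.filter fun k : Fin p => x k ≤ x j').card : ℝ) ≤ t * p := by
        calc ((Finset.univ.filter fun k : Fin p => x k ≤ x j').card : ℝ)
            ≤ 1 + (c (Φ x) : ℝ) := by exact_mod_cast hcount
          _ ≤ t * p := hcast
      exact Nat.le_floor hrank
    -- exchangeability: all rank sets have the same measure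
    have hswap : ∀ i : Fin p, ν (B i) = ν (B j') := by
      intro i
      set e : Fin p ≃ Fin p := Equiv.swap i j' with he
      have hmp : MeasurePreserving
          (MeasurableEquiv.piCongrLeft (fun _ : Fin p => ℝ) e.symm) ν ν :=
        measurePreserving_piCongrLeft (fun _ : Fin p => P₀) e.symm
      have hcoe : ∀ x : Fin p → ℝ,
          (MeasurableEquiv.piCongrLeft (fun _ : Fin p => ℝ) e.symm) x = x ∘ e := by
        intro x; funext k
        simp [MeasurableEquiv.piCongrLeft, Equiv.piCongrLeft_apply, Equiv.piCongrLeft',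
          Equiv.symm_symm]
      have hpre : (MeasurableEquiv.piCongrLeft (fun _ : Fin p => ℝ) e.symm) ⁻¹' (B j')
          = B i := by
        ext x
        simp only [Set.mem_preimage, hB, Set.mem_setOf_eq, hcoe]
        have hej : e j' = i := Equiv.swap_apply_right i j'
        have hcard : (Finset.univ.filter fun k : Fin p => x (e k) ≤ x (e j')).card
            = (Finset.univ.filter fun k : Fin p => x k ≤ x i).card := by
          rw [hej]
          simp only [Finset.card_filter]
          exact Fintype.sum_equiv e _ _ fun k => rfl
        simp only [Function.comp]
        rw [hcard]
      rw [← hpre, hmp.measure_preimage (hBmeas j').nullMeasurableSet]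
    -- summing the indicators
    have hsum : (p : ℝ≥0∞) * ν (B j') ≤ r := by
      have h1 : (p : ℝ≥0∞) * ν (B j') = ∑ i : Fin p, ν (B i) := by
        simp [hswap, Finset.card_univ]
      have h2 : ∑ i : Fin p, ν (B i)
          = ∫⁻ x, (∑ i : Fin p, (B i).indicator (fun _ => (1 : ℝ≥0∞)) x) ∂ν := by
        rw [lintegral_finset_sum]
        · refine Finset.sum_congr rfl fun i _ => ?_
          rw [lintegral_indicator (hBmeas i)]
          simp
        · exact fun i _ => measurable_const.indicator (hBmeas i)
      have h3 : ∀ x, (∑ i : Fin p, (B i).indicator (fun _ => (1 : ℝ≥0∞)) x) ≤ r := by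
        intro x
        have : (∑ i : Fin p, (B i).indicator (fun _ => (1 : ℝ≥0∞)) x)
            = ((Finset.univ.filter fun i : Fin p => x ∈ B i).card : ℝ≥0∞) := by
          rw [Finset.card_filter]
          push_cast
          refine Finset.sum_congr rfl fun i _ => ?_
          by_cases h : x ∈ B i <;> simp [Set.indicator, h]
        rw [this]
        have : (Finset.univ.filter fun i : Fin p => x ∈ B i).card ≤ r := by
          simpa [hB] using rank_card_le (r := r) x
        exact_mod_cast this
      have h4 : ∫⁻ x, (∑ i : Fin p, (B i).indicator (fun _ => (1 : ℝ≥0∞)) x) ∂ν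
          ≤ ∫⁻ _, (r : ℝ≥0∞) ∂ν := lintegral_mono h3
      have h5 : ∫⁻ _, (r : ℝ≥0∞) ∂ν = r := by
        simp [lintegral_const]
      rw [h1, h2]
      calc _ ≤ ∫⁻ _, (r : ℝ≥0∞) ∂ν := h4
        _ = r := h5
    have hdiv : ν (B j') ≤ (r : ℝ≥0∞) / p := by
      rw [ENNReal.le_div_iff_mul_le (Or.inl (by exact_mod_cast hp0.ne'))
        (Or.inl (ENNReal.natCast_ne_top p)), mul_comm]
      exact hsum
    -- put everything together
    have hfinal : μ {ω | π p ω ≤ t} ≤ (r : ℝ≥0∞) / p := by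
      rw [hmap, hflip]
      exact le_trans (measure_mono hsub) (le_trans le_rfl (le_trans (le_of_eq rfl) hdiv))
    have : (μ {ω | π p ω ≤ t}).toReal ≤ ((r : ℝ≥0∞) / p).toReal := by
      refine ENNReal.toReal_mono ?_ hfinal
      simp [ENNReal.div_eq_top, hp0.ne']
    refine le_trans this ?_
    rw [ENNReal.toReal_div, ENNReal.toReal_natCast, ENNReal.toReal_natCast]
    rw [div_le_iff₀ (by positivity : (0:ℝ) < p)]
    calc (r : ℝ) ≤ t * p := Nat.floor_le (by positivity)
      _ = t * p := rfl
  · -- trivial case `t = 1`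
    subst ht1'
    refine Filter.limsup_le_of_le hbdd ?_
    refine Filter.Eventually.of_forall fun p => ?_
    have h1 : μ {ω | π p ω ≤ 1} ≤ 1 := prob_le_one
    calc (μ {ω | π p ω ≤ 1}).toReal ≤ (1 : ℝ≥0∞).toReal :=
        ENNReal.toReal_mono ENNReal.one_ne_top h1
      _ = 1 := ENNReal.toReal_one
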